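/- Let K be a field of characteristic not 2 containing a square root i of −1. Let a, b ∈ K be nonzero with a ≠ ±b and a ≠ ±ib. Consider the elliptic curve E: y² = (x−(a²−b²)²)(x−(a²+b²)²)x over K. Then every point of order 2 on E is divisible by 2 in E(K); in particular E(K) contains a subgroup isomorphic to ℤ/4ℤ ⊕ ℤ/4ℤ. -/

import Mathlib

/-- The elliptic curve `y² = (x − α₁)(x − α₂)(x − α₃)` as an affine Weierstrass curve. -/
def cubicCurve {K : Type*} [Field K] (α₁ α₂ α₃ : K) : WeierstrassCurve.Affine K :=
  { a₁ := 0, a₂ := -(α₁ + α₂ + α₃), a₃ := 0,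
    a₄ := α₁ * α₂ + α₂ * α₃ + α₃ * α₁, a₆ := -(α₁ * α₂ * α₃) }

open WeierstrassCurve.Affine WeierstrassCurve.Affine.Point

lemma some_eq_some {K : Type*} [Field K] {W : WeierstrassCurve.Affine K}
    {x₁ y₁ x₂ y₂ : K} (hx : x₁ = x₂) (hy : y₁ = y₂)
    (h₁ : W.Nonsingular x₁ y₁) (h₂ : W.Nonsingular x₂ y₂) :
    WeierstrassCurve.Affine.Point.some _ _ h₁ = WeierstrassCurve.Affine.Point.some _ _ h₂ := by
  subst hx; subst hy; rfl

/-- A two-torsion point `(α, 0)` on a cubic curve with root differences that are squares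
    is nonsingular. -/
lemma ns_lemma {K : Type*} [Field K] {W : WeierstrassCurve.Affine K} (α β γ : K)
    (e1 : W.a₁ = 0) (e2 : W.a₂ = -(α + β + γ)) (e3 : W.a₃ = 0)
    (e4 : W.a₄ = α * β + β * γ + γ * α) (e6 : W.a₆ = -(α * β * γ))
    (hd : (α - β) * (α - γ) ≠ 0) : W.Nonsingular α 0 := by
  rw [nonsingular_iff]
  constructor
  · rw [equation_iff, e1, e2, e3, e4, e6]; ring
  · left
    rw [e1, e2, e4]
    intro h
    exact hd (by linear_combination -h)

open Classical in
/-- The halving lemma: if `u² = α − β`, `v² = α − γ` and `(u+v)uv ≠ 0`, the point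
    `Q = (α + uv, (u+v)uv)` satisfies `2 • Q = (α, 0)`. -/
lemma half_lemma {K : Type*} [Field K] {W : WeierstrassCurve.Affine K} (h2 : (2 : K) ≠ 0)
    (α β γ u v : K)
    (e1 : W.a₁ = 0) (e2 : W.a₂ = -(α + β + γ)) (e3 : W.a₃ = 0)
    (e4 : W.a₄ = α * β + β * γ + γ * α) (e6 : W.a₆ = -(α * β * γ))
    (hu : u ^ 2 = α - β) (hv : v ^ 2 = α - γ)
    (hy : (u + v) * (u * v) ≠ 0)
    (hT : W.Nonsingular α 0) :
    ∃ Q : W.Point, 2 • Q = WeierstrassCurve.Affine.Point.some _ _ hT := by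
  have hβ : β = α - u ^ 2 := by linear_combination hu
  have hγ : γ = α - v ^ 2 := by linear_combination hv
  subst hβ hγ
  set xq : K := α + u * v with hxq
  set yq : K := (u + v) * (u * v) with hyq
  have hyqne : yq ≠ 0 := hy
  have hQeq : W.Equation xq yq := by
    rw [equation_iff, e1, e2, e3, e4, e6, hxq, hyq]; ring
  have hy' : yq ≠ W.negY xq yq := by
    rw [negY, e1, e3]
    intro h
    exact hyqne (by
      have h2y : 2 * yq = 0 := by linear_combination h
      rcases mul_eq_zero.mp h2y with h' | h'
      · exact absurd h' h2
      · exact h')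
  have hQns : W.Nonsingular xq yq := (W.nonsingular_iff xq yq).mpr ⟨hQeq, Or.inr hy'⟩
  refine ⟨WeierstrassCurve.Affine.Point.some _ _ hQns, ?_⟩
  rw [two_smul, add_self_of_Y_ne hy']
  have hden : yq - W.negY xq yq = 2 * yq := by rw [negY, e1, e3]; ring
  have hs : W.slope xq xq yq yq = u + v := by
    rw [slope_of_Y_ne rfl hy', hden, div_eq_iff (mul_ne_zero h2 hyqne), e1, e2, e4, hxq, hyq]
    ring
  have hX : W.addX xq xq (u + v) = α := by
    rw [addX, e1, e2, hxq]; ring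
  have hY : W.addY xq xq yq (u + v) = 0 := by
    rw [addY, negAddY, addX, negY, e1, e2, e3, hxq, hyq]; ring
  exact some_eq_some (by rw [hs]; exact hX) (by rw [hs]; exact hY) _ hT

open Classical in
theorem full_four_torsion {K : Type*} [Field K] (h2 : (2 : K) ≠ 0)
    (i a b : K) (hi : i ^ 2 = -1) (ha : a ≠ 0) (hb : b ≠ 0)
    (hab : a ≠ b) (hab' : a ≠ -b) (haib : a ≠ i * b) (haib' : a ≠ -(i * b)) :
    (∀ P : (cubicCurve ((a ^ 2 - b ^ 2) ^ 2) ((a ^ 2 + b ^ 2) ^ 2) 0).Point,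
        addOrderOf P = 2 →
        ∃ Q : (cubicCurve ((a ^ 2 - b ^ 2) ^ 2) ((a ^ 2 + b ^ 2) ^ 2) 0).Point,
          2 • Q = P) ∧
      ∃ φ : (ZMod 4 × ZMod 4) →+
          (cubicCurve ((a ^ 2 - b ^ 2) ^ 2) ((a ^ 2 + b ^ 2) ^ 2) 0).Point,
        Function.Injective φ := by
  set α₁ : K := (a ^ 2 - b ^ 2) ^ 2 with hα₁
  set α₂ : K := (a ^ 2 + b ^ 2) ^ 2 with hα₂
  set W : WeierstrassCurve.Affine K := cubicCurve α₁ α₂ 0 with hW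
  have e1 : W.a₁ = 0 := rfl
  have e3 : W.a₃ = 0 := rfl
  have e2 : W.a₂ = -(α₁ + α₂ + 0) := rfl
  have e4 : W.a₄ = α₁ * α₂ + α₂ * 0 + 0 * α₁ := rfl
  have e6 : W.a₆ = -(α₁ * α₂ * 0) := rfl
  -- basic nonvanishing
  have hine : i ≠ 0 := by
    intro h
    rw [h] at hi
    exact one_ne_zero (α := K) (by linear_combination hi)
  have hsub : a ^ 2 - b ^ 2 ≠ 0 := by
    have h1 : a - b ≠ 0 := sub_ne_zero.mpr hab
    have h1' : a + b ≠ 0 := fun h => hab' (by linear_combination h)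
    intro h; exact h1 (by
      rcases mul_eq_zero.mp (show (a - b) * (a + b) = 0 by linear_combination h) with h' | h'
      · exact h'
      · exact absurd h' h1')
  have hadd : a ^ 2 + b ^ 2 ≠ 0 := by
    have h1 : a - i * b ≠ 0 := sub_ne_zero.mpr haib
    have h1' : a + i * b ≠ 0 := fun h => haib' (by linear_combination h)
    intro h
    have : (a - i * b) * (a + i * b) = 0 := by linear_combination h - b^2 * hi
    rcases mul_eq_zero.mp this with h' | h'
    · exact h1 h'
    · exact h1' h'
  have haibne : a + i * b ≠ 0 := fun h => haib' (by linear_combination h)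
  have habne : a + b ≠ 0 := fun h => hab' (by linear_combination h)
  -- the three 2-torsion points
  have hd1 : (α₁ - α₂) * (α₁ - 0) ≠ 0 := by
    apply mul_ne_zero
    · intro h
      apply mul_ne_zero (mul_ne_zero (mul_ne_zero h2 h2) (pow_ne_zero 2 ha)) (pow_ne_zero 2 hb)
      show 2 * 2 * a ^ 2 * b ^ 2 = 0
      linear_combination -h
    · rw [sub_zero, hα₁]; exact pow_ne_zero 2 hsub
  have hd2 : (α₂ - α₁) * (α₂ - 0) ≠ 0 := by
    apply mul_ne_zero
    · intro h
      apply mul_ne_zero (mul_ne_zero (mul_ne_zero h2 h2) (pow_ne_zero 2 ha)) (pow_ne_zero 2 hb)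
      show 2 * 2 * a ^ 2 * b ^ 2 = 0
      linear_combination h
    · rw [sub_zero, hα₂]; exact pow_ne_zero 2 hadd
  have hd3 : ((0 : K) - α₁) * (0 - α₂) ≠ 0 := by
    apply mul_ne_zero <;> rw [zero_sub, neg_ne_zero]
    · exact pow_ne_zero 2 hsub
    · exact pow_ne_zero 2 hadd
  have hT1 : W.Nonsingular α₁ 0 := ns_lemma α₁ α₂ 0 e1 e2 e3 e4 e6 hd1
  have hT2 : W.Nonsingular α₂ 0 :=
    ns_lemma α₂ α₁ 0 e1 (by rw [e2]; ring) e3 (by rw [e4]; ring) (by rw [e6]; ring) hd2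
  have hT3 : W.Nonsingular 0 0 :=
    ns_lemma 0 α₁ α₂ e1 (by rw [e2]; ring) e3 (by rw [e4]; ring) (by rw [e6]; ring) hd3
  -- halves
  obtain ⟨Q₁, hQ1⟩ := half_lemma h2 α₁ α₂ 0 (2 * (i * (a * b))) (a ^ 2 - b ^ 2) e1 e2 e3 e4 e6
    (by rw [hα₁, hα₂]; linear_combination 4 * a^2 * b^2 * hi) (by rw [hα₁]; ring)
    (by
      apply mul_ne_zero
      · intro h
        exact pow_ne_zero 2 haibne (by linear_combination h + b^2 * hi)
      · exact mul_ne_zero (mul_ne_zero h2 (mul_ne_zero hine (mul_ne_zero ha hb))) hsub) hT1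
  obtain ⟨Q₂, hQ2⟩ := half_lemma h2 α₂ α₁ 0 (2 * (a * b)) (a ^ 2 + b ^ 2) e1
    (by rw [e2]; ring) e3 (by rw [e4]; ring) (by rw [e6]; ring)
    (by rw [hα₁, hα₂]; ring) (by rw [hα₂]; ring)
    (by
      apply mul_ne_zero
      · intro h
        exact pow_ne_zero 2 habne (by linear_combination h)
      · exact mul_ne_zero (mul_ne_zero h2 (mul_ne_zero ha hb)) hadd) hT2
  obtain ⟨Q₃, hQ3⟩ := half_lemma h2 0 α₁ α₂ (i * (a ^ 2 - b ^ 2)) (i * (a ^ 2 + b ^ 2)) e1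
    (by rw [e2]; ring) e3 (by rw [e4]; ring) (by rw [e6]; ring)
    (by rw [hα₁]; linear_combination (a^2-b^2)^2 * hi)
    (by rw [hα₂]; linear_combination (a^2+b^2)^2 * hi)
    (by
      apply mul_ne_zero
      · intro h
        exact mul_ne_zero (mul_ne_zero h2 hine) (pow_ne_zero 2 ha) (by linear_combination h)
      · exact mul_ne_zero (mul_ne_zero hine hsub) (mul_ne_zero hine hadd)) hT3
  set T₁ : W.Point := WeierstrassCurve.Affine.Point.some _ _ hT1 with hT₁def
  set T₂ : W.Point := WeierstrassCurve.Affine.Point.some _ _ hT2 with hT₂def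
  -- torsion facts
  have hnegY : ∀ x : K, W.negY x 0 = 0 := by intro x; rw [negY, e1, e3]; ring
  have hT1two : 2 • T₁ = 0 := by
    rw [two_smul, hT₁def, add_self_of_Y_eq (by rw [hnegY])]
  have hT2two : 2 • T₂ = 0 := by
    rw [two_smul, hT₂def, add_self_of_Y_eq (by rw [hnegY])]
  have h4Q1 : (4 : ℕ) • Q₁ = 0 := by
    rw [show (4 : ℕ) = 2 * 2 from rfl, mul_smul, hQ1, hT1two]
  have h4Q2 : (4 : ℕ) • Q₂ = 0 := by
    rw [show (4 : ℕ) = 2 * 2 from rfl, mul_smul, hQ2, hT2two]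
  have hT1ne : T₁ ≠ 0 := some_ne_zero _
  have hT2ne : T₂ ≠ 0 := some_ne_zero _
  have hα₁₂ : α₁ ≠ α₂ := by
    intro h
    apply mul_ne_zero (mul_ne_zero (mul_ne_zero h2 h2) (pow_ne_zero 2 ha)) (pow_ne_zero 2 hb)
    show 2 * 2 * a ^ 2 * b ^ 2 = 0
    rw [hα₁, hα₂] at h
    linear_combination -h
  have hT12ne : T₁ + T₂ ≠ 0 := by
    intro h
    have h' : T₁ = -T₂ := eq_neg_of_add_eq_zero_left h
    rw [hT₁def, hT₂def, neg_some] at h'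
    exact hα₁₂ (by injection h')
  constructor
  · -- every 2-torsion point is divisible by 2
    intro P hP
    have h2P : 2 • P = 0 := by
      have := addOrderOf_nsmul_eq_zero P
      rwa [hP] at this
    rcases P with _ | @⟨x, y, h⟩
    · rw [← WeierstrassCurve.Affine.Point.zero_def, addOrderOf_zero] at hP
      exact absurd hP (by norm_num)
    · by_cases hy : y = W.negY x y
      · have hy0 : y = 0 := by
          rw [negY, e1, e3] at hy
          have h2y : 2 * y = 0 := by linear_combination hy
          rcases mul_eq_zero.mp h2y with h' | h'
          · exact absurd h' h2
          · exact h'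
        subst hy0
        have heq := ((W.nonsingular_iff x 0).mp h).1
        rw [equation_iff, e2, e4, e6] at heq
        have hroots : (x - α₁) * ((x - α₂) * x) = 0 := by linear_combination -heq
        rcases mul_eq_zero.mp hroots with hx | hx'
        · have hx : x = α₁ := by linear_combination hx
          subst hx
          exact ⟨Q₁, hQ1⟩
        · rcases mul_eq_zero.mp hx' with hx | hx
          · have hx : x = α₂ := by linear_combination hx
            subst hx
            exact ⟨Q₂, hQ2⟩
          · subst hx
            exact ⟨Q₃, hQ3⟩
      · rw [two_smul, add_self_of_Y_ne hy] at h2P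
        exact absurd h2P (some_ne_zero _)
  · -- subgroup isomorphic to ZMod 4 × ZMod 4
    have hz1 : zmultiplesHom W.Point Q₁ (4 : ℤ) = 0 := by
      rw [zmultiplesHom_apply, show ((4 : ℤ) • Q₁) = (4 : ℕ) • Q₁ by
        rw [← natCast_zsmul]; norm_num]
      exact h4Q1
    have hz2 : zmultiplesHom W.Point Q₂ (4 : ℤ) = 0 := by
      rw [zmultiplesHom_apply, show ((4 : ℤ) • Q₂) = (4 : ℕ) • Q₂ by
        rw [← natCast_zsmul]; norm_num]
      exact h4Q2
    set f₁ : ZMod 4 →+ W.Point := ZMod.lift 4 ⟨zmultiplesHom W.Point Q₁, hz1⟩ with hf₁def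
    set f₂ : ZMod 4 →+ W.Point := ZMod.lift 4 ⟨zmultiplesHom W.Point Q₂, hz2⟩ with hf₂def
    have hcast : ∀ m : ZMod 4, ((m.val : ℤ) : ZMod 4) = m := by
      intro m
      rw [Int.cast_natCast, ZMod.natCast_val, ZMod.cast_id]
    have hf₁ : ∀ m : ZMod 4, f₁ m = m.val • Q₁ := by
      intro m
      conv_lhs => rw [← hcast m]
      rw [hf₁def, ZMod.lift_coe]
      exact natCast_zsmul Q₁ m.val
    have hf₂ : ∀ m : ZMod 4, f₂ m = m.val • Q₂ := by
      intro m
      conv_lhs => rw [← hcast m]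
      rw [hf₂def, ZMod.lift_coe]
      exact natCast_zsmul Q₂ m.val
    have key : ∀ k l : ℕ, k < 4 → l < 4 → k • Q₁ + l • Q₂ = 0 → k = 0 ∧ l = 0 := by
      intro k l hk hl h
      have hdbl : (k % 2) • T₁ + (l % 2) • T₂ = 0 := by
        calc (k % 2) • T₁ + (l % 2) • T₂
            = ((k / 2) • ((4 : ℕ) • Q₁) + (k % 2) • (2 • Q₁)) +
              ((l / 2) • ((4 : ℕ) • Q₂) + (l % 2) • (2 • Q₂)) := by
              rw [hQ1, hQ2, h4Q1, h4Q2, smul_zero, smul_zero,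
                zero_add, zero_add]
          _ = (k / 2 * 4 + k % 2 * 2) • Q₁ + (l / 2 * 4 + l % 2 * 2) • Q₂ := by
              rw [add_smul, add_smul, mul_smul, mul_smul, mul_smul, mul_smul]
          _ = (2 * k) • Q₁ + (2 * l) • Q₂ := by
              rw [show k / 2 * 4 + k % 2 * 2 = 2 * k by omega,
                show l / 2 * 4 + l % 2 * 2 = 2 * l by omega]
          _ = 2 • (k • Q₁ + l • Q₂) := by rw [smul_add, mul_smul, mul_smul]
          _ = 0 := by rw [h, smul_zero]
      rcases Nat.mod_two_eq_zero_or_one k with hk2 | hk2 <;>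
        rcases Nat.mod_two_eq_zero_or_one l with hl2 | hl2 <;>
          rw [hk2, hl2] at hdbl
      · -- both even
        have hk' : k = 0 ∨ k = 2 := by omega
        have hl' : l = 0 ∨ l = 2 := by omega
        rcases hk' with rfl | rfl <;> rcases hl' with rfl | rfl
        · exact ⟨rfl, rfl⟩
        · rw [zero_smul, zero_add, hQ2] at h
          exact absurd h hT2ne
        · rw [zero_smul, add_zero, hQ1] at h
          exact absurd h hT1ne
        · rw [hQ1, hQ2] at h
          exact absurd h hT12ne
      · rw [zero_smul, one_smul, zero_add] at hdbl
        exact absurd hdbl hT2ne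
      · rw [zero_smul, one_smul, add_zero] at hdbl
        exact absurd hdbl hT1ne
      · rw [one_smul, one_smul] at hdbl
        exact absurd hdbl hT12ne
    refine ⟨f₁.coprod f₂, ?_⟩
    rw [injective_iff_map_eq_zero]
    rintro ⟨m, n⟩ hmn
    rw [AddMonoidHom.coprod_apply, hf₁, hf₂] at hmn
    obtain ⟨hm, hn⟩ := key m.val n.val (ZMod.val_lt m) (ZMod.val_lt n) hmn
    exact Prod.ext ((ZMod.val_eq_zero m).mp hm) ((ZMod.val_eq_zero n).mp hn)
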